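/- Let a : ℤ×ℤ → ℂ be bounded (|a_{j,k}| ≤ M for all (j,k)), and let b, g : ℤ×ℤ → ℂ decay super-algebraically: for every natural number q there exist constants C_q, D_q such that |b_{j,k}| ≤ C_q (1+max(|j|,|k|))^{-q} and |g_{j,k}| ≤ D_q (1+max(|j|,|k|))^{-q} for all (j,k). For a positive integer F define f̃^F_{m,n} := Σ_{|j|≤F, |k|≤F} a_{j,k} b_{m−j,n−k} for all (m,n) ∈ ℤ², and f^{t,F}_{m,n} := Σ_{|j|≤F, |k|≤F, |m−j|≤F, |n−k|≤F} a_{j,k} b_{m−j,n−k}. Then for every natural number p there exists a constant C > 0 such that for all positive integers F, | Σ_{(m,n)∈ℤ²} f̃^F_{m,n} g_{m,n} − Σ_{|m|≤F, |n|≤F} f^{t,F}_{m,n} g_{m,n} | ≤ C · F^{-p}. -/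

import Mathlib

open Finset

lemma aux_shift_sum_le {f : ℤ × ℤ → ℝ} (hf0 : ∀ x, 0 ≤ f x) (hf : Summable f)
    (mn : ℤ × ℤ) (s : Finset (ℤ × ℤ)) :
    ∑ jk ∈ s, f (mn.1 - jk.1, mn.2 - jk.2) ≤ ∑' x, f x := by
  have hinj : ∀ x ∈ s, ∀ y ∈ s,
      (mn.1 - x.1, mn.2 - x.2) = ((mn.1 - y.1, mn.2 - y.2) : ℤ × ℤ) → x = y := by
    intro x _ y _ h
    simp only [Prod.mk.injEq] at h
    exact Prod.ext (by omega) (by omega)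
  rw [← Finset.sum_image (f := f) hinj]
  exact Summable.sum_le_tsum _ (fun _ _ => hf0 _) hf

lemma aux_w_summable :
    Summable (fun mn : ℤ × ℤ => ((1 + ((max |mn.1| |mn.2| : ℤ) : ℝ)) ^ 4)⁻¹) := by
  have hnat : Summable (fun n : ℕ => ((1 + (n : ℝ)) ^ 2)⁻¹) := by
    have h2 : Summable (fun n : ℕ => 1 / ((n : ℝ)) ^ 2) :=
      Real.summable_one_div_nat_pow.mpr one_lt_two
    have h3 := (summable_nat_add_iff 1).mpr h2
    exact h3.congr fun n => by push_cast; ring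
  have h1 : Summable (fun m : ℤ => ((1 + |(m : ℝ)|) ^ 2)⁻¹) := by
    apply Summable.of_nat_of_neg_add_one
    · exact hnat.congr fun n => by push_cast [abs_of_nonneg (by positivity : (0:ℝ) ≤ (n:ℝ))]; ring_nf
    · have h4 := (summable_nat_add_iff 1).mpr hnat
      refine h4.congr fun n => ?_
      have : |((-(n+1) : ℤ) : ℝ)| = (n : ℝ) + 1 := by
        push_cast; rw [abs_neg, abs_of_nonneg (by positivity)]
      rw [this]; push_cast; ring_nf
  have hprod := h1.mul_of_nonneg h1 (fun m => by positivity) (fun m => by positivity)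
  apply hprod.of_nonneg_of_le (fun mn => by positivity)
  intro mn
  have hr : ((max |mn.1| |mn.2| : ℤ) : ℝ) = max |(mn.1 : ℝ)| |(mn.2 : ℝ)| := by
    push_cast; rfl
  set x := |(mn.1 : ℝ)| with hx
  set y := |(mn.2 : ℝ)| with hy
  have hx0 : 0 ≤ x := abs_nonneg _
  have hy0 : 0 ≤ y := abs_nonneg _
  rw [hr, ← mul_inv]
  have h5 : (1 + x) ^ 2 * (1 + y) ^ 2 ≤ (1 + max x y) ^ 4 := by
    have h6 : (1 + x) ^ 2 ≤ (1 + max x y) ^ 2 := by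
      apply pow_le_pow_left₀ (by positivity)
      linarith [le_max_left x y]
    have h7 : (1 + y) ^ 2 ≤ (1 + max x y) ^ 2 := by
      apply pow_le_pow_left₀ (by positivity)
      linarith [le_max_right x y]
    calc (1 + x) ^ 2 * (1 + y) ^ 2 ≤ (1 + max x y) ^ 2 * (1 + max x y) ^ 2 :=
          mul_le_mul h6 h7 (by positivity) (by positivity)
      _ = (1 + max x y) ^ 4 := by ring
  exact inv_anti₀ (by positivity) h5

lemma aux_den_pos (mn : ℤ × ℤ) : (0:ℝ) < 1 + ((max |mn.1| |mn.2| : ℤ) : ℝ) := by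
  have h : (0:ℤ) ≤ max |mn.1| |mn.2| := le_trans (abs_nonneg _) (le_max_left _ _)
  have h2 : (0:ℝ) ≤ ((max |mn.1| |mn.2| : ℤ) : ℝ) := by exact_mod_cast h
  linarith

lemma aux_decay_bound {h : ℤ × ℤ → ℂ} {c : ℝ} (p : ℕ)
    (hc : ∀ jk : ℤ × ℤ, ‖h jk‖ ≤ c / (1 + ((max |jk.1| |jk.2| : ℤ) : ℝ)) ^ (p + 4))
    (hc0 : 0 ≤ c) {F : ℕ} (hF : 0 < F) {mn : ℤ × ℤ} (hmn : (F : ℤ) < max |mn.1| |mn.2|) :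
    ‖h mn‖ ≤ (c / (F : ℝ) ^ p) * ((1 + ((max |mn.1| |mn.2| : ℤ) : ℝ)) ^ 4)⁻¹ := by
  set r : ℝ := 1 + ((max |mn.1| |mn.2| : ℤ) : ℝ) with hr
  have hrpos : 0 < r := aux_den_pos mn
  have hFle : (F : ℝ) ≤ r := by
    have h1 : (F : ℤ) ≤ max |mn.1| |mn.2| := le_of_lt hmn
    have h2 : ((F : ℤ) : ℝ) ≤ ((max |mn.1| |mn.2| : ℤ) : ℝ) := by exact_mod_cast h1
    rw [hr]; push_cast at h2 ⊢; linarith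
  have h3 : (F : ℝ) ^ p * r ^ 4 ≤ r ^ (p + 4) := by
    rw [pow_add]
    exact mul_le_mul_of_nonneg_right (pow_le_pow_left₀ (Nat.cast_nonneg F) hFle p)
      (pow_nonneg (le_of_lt hrpos) 4)
  have hF0 : (0:ℝ) ≤ (F : ℝ) ^ p := by positivity
  calc ‖h mn‖ ≤ c / r ^ (p + 4) := hc mn
    _ ≤ c / ((F : ℝ) ^ p * r ^ 4) := by
        have hFpos : (0:ℝ) < (F : ℝ) ^ p := by
          have : (0:ℝ) < (F : ℝ) := by exact_mod_cast hF
          positivity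
        exact div_le_div_of_nonneg_left hc0 (by positivity) h3
    _ = (c / (F : ℝ) ^ p) * (r ^ 4)⁻¹ := by
        rw [div_mul_eq_div_div, div_eq_mul_inv]

/-- Super-algebraic convergence of the FFT-based quadrature: with `a` bounded and
`b`, `g` decaying faster than any polynomial rate, the difference between the exact
pairing `∑_{(m,n)∈ℤ²} f̃^F_{m,n} g_{m,n}` (with
`f̃^F_{m,n} = ∑_{|j|≤F,|k|≤F} a_{j,k} b_{m−j,n−k}`) and the doubly truncated quadrature
`∑_{|m|,|n|≤F} f^{t,F}_{m,n} g_{m,n}` (with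
`f^{t,F}_{m,n} = ∑_{|j|,|k|,|m−j|,|n−k|≤F} a_{j,k} b_{m−j,n−k}`) is `O(F^{-p})` for every `p`. -/
theorem stmt9 (M : ℝ) (a b g : ℤ × ℤ → ℂ)
    (ha : ∀ jk : ℤ × ℤ, ‖a jk‖ ≤ M)
    (hb : ∀ q : ℕ, ∃ Cq : ℝ, ∀ jk : ℤ × ℤ,
      ‖b jk‖ ≤ Cq / (1 + ((max |jk.1| |jk.2| : ℤ) : ℝ)) ^ q)
    (hg : ∀ q : ℕ, ∃ Dq : ℝ, ∀ jk : ℤ × ℤ,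
      ‖g jk‖ ≤ Dq / (1 + ((max |jk.1| |jk.2| : ℤ) : ℝ)) ^ q)
    (p : ℕ) :
    ∃ C > 0, ∀ F : ℕ, 0 < F →
      ‖(∑' mn : ℤ × ℤ,
            (∑ jk ∈ Finset.Icc (-(F : ℤ)) (F : ℤ) ×ˢ Finset.Icc (-(F : ℤ)) (F : ℤ),
                a jk * b (mn.1 - jk.1, mn.2 - jk.2)) * g mn) -
          ∑ mn ∈ Finset.Icc (-(F : ℤ)) (F : ℤ) ×ˢ Finset.Icc (-(F : ℤ)) (F : ℤ),
            (∑ jk ∈ (Finset.Icc (-(F : ℤ)) (F : ℤ) ×ˢ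
                  Finset.Icc (-(F : ℤ)) (F : ℤ)).filter
                  (fun jk => |mn.1 - jk.1| ≤ (F : ℤ) ∧ |mn.2 - jk.2| ≤ (F : ℤ)),
                a jk * b (mn.1 - jk.1, mn.2 - jk.2)) * g mn‖
        ≤ C / (F : ℝ) ^ p := by
  obtain ⟨Cb, hCb⟩ := hb (p + 4)
  obtain ⟨Dg, hDg⟩ := hg (p + 4)
  obtain ⟨Cb4, hCb4⟩ := hb 4
  obtain ⟨Dg4, hDg4⟩ := hg 4
  set w : ℤ × ℤ → ℝ := fun mn => ((1 + ((max |mn.1| |mn.2| : ℤ) : ℝ)) ^ 4)⁻¹ with hw_def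
  have hw_nonneg : ∀ mn, 0 ≤ w mn := fun mn =>
    inv_nonneg.mpr (pow_nonneg (le_of_lt (aux_den_pos mn)) 4)
  have hw_sum : Summable w := aux_w_summable
  set Sw := ∑' mn, w mn with hSw_def
  have hSw0 : 0 ≤ Sw := tsum_nonneg hw_nonneg
  have hM0 : 0 ≤ M := le_trans (norm_nonneg _) (ha (0, 0))
  have hCb0 : 0 ≤ Cb := by
    have h := hCb (0, 0)
    simp only [abs_zero, max_self, Int.cast_zero, add_zero, one_pow, div_one] at h
    exact le_trans (norm_nonneg _) h
  have hDg0 : 0 ≤ Dg := by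
    have h := hDg (0, 0)
    simp only [abs_zero, max_self, Int.cast_zero, add_zero, one_pow, div_one] at h
    exact le_trans (norm_nonneg _) h
  have hb_le : ∀ jk, ‖b jk‖ ≤ Cb4 * w jk := fun jk => by
    have h := hCb4 jk; rwa [div_eq_mul_inv] at h
  have hg_le : ∀ jk, ‖g jk‖ ≤ Dg4 * w jk := fun jk => by
    have h := hDg4 jk; rwa [div_eq_mul_inv] at h
  have hbsum : Summable (fun jk => ‖b jk‖) :=
    (hw_sum.mul_left Cb4).of_nonneg_of_le (fun _ => norm_nonneg _) hb_le
  have hgsum : Summable (fun jk => ‖g jk‖) :=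
    (hw_sum.mul_left Dg4).of_nonneg_of_le (fun _ => norm_nonneg _) hg_le
  set Sb := ∑' jk, ‖b jk‖ with hSb_def
  set Sg := ∑' jk, ‖g jk‖ with hSg_def
  have hSb0 : 0 ≤ Sb := tsum_nonneg fun _ => norm_nonneg _
  have hSg0 : 0 ≤ Sg := tsum_nonneg fun _ => norm_nonneg _
  refine ⟨M * Sb * Dg * Sw + M * Cb * Sw * Sg + 1, ?_, ?_⟩
  · have h1 : 0 ≤ M * Sb * Dg * Sw :=
      mul_nonneg (mul_nonneg (mul_nonneg hM0 hSb0) hDg0) hSw0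
    have h2 : 0 ≤ M * Cb * Sw * Sg :=
      mul_nonneg (mul_nonneg (mul_nonneg hM0 hCb0) hSw0) hSg0
    linarith
  intro F hF
  have hFpos : (0:ℝ) < (F : ℝ) := by exact_mod_cast hF
  have hFpow : (0:ℝ) < (F : ℝ) ^ p := by positivity
  set B := Finset.Icc (-(F : ℤ)) (F : ℤ) ×ˢ Finset.Icc (-(F : ℤ)) (F : ℤ) with hB_def
  set ft : ℤ × ℤ → ℂ := fun mn => ∑ jk ∈ B, a jk * b (mn.1 - jk.1, mn.2 - jk.2) with hft_def
  set tr : ℤ × ℤ → ℂ := fun mn =>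
    ∑ jk ∈ B.filter (fun jk => |mn.1 - jk.1| ≤ (F : ℤ) ∧ |mn.2 - jk.2| ≤ (F : ℤ)),
      a jk * b (mn.1 - jk.1, mn.2 - jk.2) with htr_def
  -- uniform bound on ft
  have hft_bd : ∀ mn : ℤ × ℤ, ‖ft mn‖ ≤ M * Sb := by
    intro mn
    calc ‖ft mn‖ ≤ ∑ jk ∈ B, ‖a jk * b (mn.1 - jk.1, mn.2 - jk.2)‖ := norm_sum_le _ _
      _ ≤ ∑ jk ∈ B, M * ‖b (mn.1 - jk.1, mn.2 - jk.2)‖ := by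
          refine Finset.sum_le_sum fun jk _ => ?_
          rw [norm_mul]
          exact mul_le_mul_of_nonneg_right (ha jk) (norm_nonneg _)
      _ = M * ∑ jk ∈ B, ‖b (mn.1 - jk.1, mn.2 - jk.2)‖ := by rw [Finset.mul_sum]
      _ ≤ M * Sb :=
          mul_le_mul_of_nonneg_left
            (aux_shift_sum_le (fun _ => norm_nonneg _) hbsum mn B) hM0
  have hTnorm : Summable (fun mn : ℤ × ℤ => ‖ft mn * g mn‖) := by
    apply (hgsum.mul_left (M * Sb)).of_nonneg_of_le (fun _ => norm_nonneg _)
    intro mn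
    rw [norm_mul]
    exact mul_le_mul_of_nonneg_right (hft_bd mn) (norm_nonneg _)
  have hT : Summable (fun mn : ℤ × ℤ => ft mn * g mn) := hTnorm.of_norm
  have hsplit := Summable.sum_add_tsum_compl (s := B) hT
  -- difference over the box
  have hbox_eq : ∀ mn : ℤ × ℤ, ft mn - tr mn =
      ∑ jk ∈ B.filter (fun jk => ¬(|mn.1 - jk.1| ≤ (F : ℤ) ∧ |mn.2 - jk.2| ≤ (F : ℤ))),
        a jk * b (mn.1 - jk.1, mn.2 - jk.2) := by
    intro mn
    have h := Finset.sum_filter_add_sum_filter_not B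
      (fun jk => |mn.1 - jk.1| ≤ (F : ℤ) ∧ |mn.2 - jk.2| ≤ (F : ℤ))
      (fun jk => a jk * b (mn.1 - jk.1, mn.2 - jk.2))
    rw [hft_def, htr_def]
    dsimp only
    linear_combination h.symm
  -- pointwise bound outside the box
  have hcompl_pt : ∀ mn : ℤ × ℤ, mn ∉ B →
      ‖ft mn * g mn‖ ≤ M * Sb * (Dg / (F : ℝ) ^ p) * w mn := by
    intro mn hmn
    have hmax : (F : ℤ) < max |mn.1| |mn.2| := by
      by_contra hcon
      push_neg at hcon
      have h1 : |mn.1| ≤ (F : ℤ) := le_trans (le_max_left _ _) hcon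
      have h2 : |mn.2| ≤ (F : ℤ) := le_trans (le_max_right _ _) hcon
      rw [abs_le] at h1 h2
      exact hmn (by
        rw [hB_def, Finset.mem_product, Finset.mem_Icc, Finset.mem_Icc]
        exact ⟨⟨h1.1, h1.2⟩, h2.1, h2.2⟩)
    have hgb := aux_decay_bound p hDg hDg0 hF hmax
    rw [norm_mul]
    calc ‖ft mn‖ * ‖g mn‖ ≤ (M * Sb) * ((Dg / (F : ℝ) ^ p) * w mn) :=
          mul_le_mul (hft_bd mn) hgb (norm_nonneg _) (mul_nonneg hM0 hSb0)
      _ = M * Sb * (Dg / (F : ℝ) ^ p) * w mn := by ring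
  -- bound on the tail sum
  have hKnn : 0 ≤ M * Sb * (Dg / (F : ℝ) ^ p) :=
    mul_nonneg (mul_nonneg hM0 hSb0) (div_nonneg hDg0 (le_of_lt hFpow))
  have htail : ‖∑' x : ↑((B : Set (ℤ × ℤ))ᶜ), ft x.val * g x.val‖
      ≤ M * Sb * (Dg / (F : ℝ) ^ p) * Sw := by
    calc ‖∑' x : ↑((B : Set (ℤ × ℤ))ᶜ), ft x.val * g x.val‖
        ≤ ∑' x : ↑((B : Set (ℤ × ℤ))ᶜ), ‖ft x.val * g x.val‖ :=
          norm_tsum_le_tsum_norm (hTnorm.subtype _)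
      _ ≤ ∑' x : ↑((B : Set (ℤ × ℤ))ᶜ), M * Sb * (Dg / (F : ℝ) ^ p) * w x.val := by
          refine Summable.tsum_le_tsum (fun x => ?_) (hTnorm.subtype _)
            ((hw_sum.mul_left (M * Sb * (Dg / (F : ℝ) ^ p))).subtype _)
          exact hcompl_pt x.val x.property
      _ = M * Sb * (Dg / (F : ℝ) ^ p) * ∑' x : ↑((B : Set (ℤ × ℤ))ᶜ), w x.val :=
          tsum_mul_left
      _ ≤ M * Sb * (Dg / (F : ℝ) ^ p) * Sw :=
          mul_le_mul_of_nonneg_left (Summable.tsum_subtype_le w _ hw_nonneg hw_sum) hKnn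
  -- bound on the in-box truncation error
  have hbox_pt : ∀ mn : ℤ × ℤ,
      ‖(ft mn - tr mn) * g mn‖ ≤ M * (Cb / (F : ℝ) ^ p) * Sw * ‖g mn‖ := by
    intro mn
    rw [norm_mul]
    have hnn : 0 ≤ M * (Cb / (F : ℝ) ^ p) * Sw :=
      mul_nonneg (mul_nonneg hM0 (div_nonneg hCb0 (le_of_lt hFpow))) hSw0
    refine mul_le_mul_of_nonneg_right ?_ (norm_nonneg _)
    rw [hbox_eq mn]
    set s := B.filter (fun jk => ¬(|mn.1 - jk.1| ≤ (F : ℤ) ∧ |mn.2 - jk.2| ≤ (F : ℤ))) with hs_def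
    calc ‖∑ jk ∈ s, a jk * b (mn.1 - jk.1, mn.2 - jk.2)‖
        ≤ ∑ jk ∈ s, ‖a jk * b (mn.1 - jk.1, mn.2 - jk.2)‖ := norm_sum_le _ _
      _ ≤ ∑ jk ∈ s, M * ((Cb / (F : ℝ) ^ p) * w (mn.1 - jk.1, mn.2 - jk.2)) := by
          refine Finset.sum_le_sum fun jk hjk => ?_
          rw [norm_mul]
          have hjk2 := (Finset.mem_filter.mp hjk).2
          have hmax : (F : ℤ) < max |mn.1 - jk.1| |mn.2 - jk.2| := by
            rw [not_and_or] at hjk2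
            rcases hjk2 with h | h
            · exact lt_of_lt_of_le (not_le.mp h) (le_max_left _ _)
            · exact lt_of_lt_of_le (not_le.mp h) (le_max_right _ _)
          have hbb := aux_decay_bound p hCb hCb0 hF (mn := (mn.1 - jk.1, mn.2 - jk.2)) hmax
          exact mul_le_mul (ha jk) hbb (norm_nonneg _) hM0
      _ = M * (Cb / (F : ℝ) ^ p) * ∑ jk ∈ s, w (mn.1 - jk.1, mn.2 - jk.2) := by
          rw [Finset.mul_sum]
          exact Finset.sum_congr rfl fun jk _ => (mul_assoc _ _ _).symm
      _ ≤ M * (Cb / (F : ℝ) ^ p) * Sw := by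
          refine mul_le_mul_of_nonneg_left
            (aux_shift_sum_le hw_nonneg hw_sum mn s) ?_
          exact mul_nonneg hM0 (div_nonneg hCb0 (le_of_lt hFpow))
  have hbox_sum : ‖∑ mn ∈ B, (ft mn - tr mn) * g mn‖
      ≤ M * (Cb / (F : ℝ) ^ p) * Sw * Sg := by
    calc ‖∑ mn ∈ B, (ft mn - tr mn) * g mn‖
        ≤ ∑ mn ∈ B, ‖(ft mn - tr mn) * g mn‖ := norm_sum_le _ _
      _ ≤ ∑ mn ∈ B, M * (Cb / (F : ℝ) ^ p) * Sw * ‖g mn‖ :=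
          Finset.sum_le_sum fun mn _ => hbox_pt mn
      _ = M * (Cb / (F : ℝ) ^ p) * Sw * ∑ mn ∈ B, ‖g mn‖ := by rw [Finset.mul_sum]
      _ ≤ M * (Cb / (F : ℝ) ^ p) * Sw * Sg := by
          refine mul_le_mul_of_nonneg_left
            (Summable.sum_le_tsum B (fun _ _ => norm_nonneg _) hgsum) ?_
          exact mul_nonneg (mul_nonneg hM0 (div_nonneg hCb0 (le_of_lt hFpow))) hSw0
  -- assemble
  have hkey : (∑' mn : ℤ × ℤ, ft mn * g mn) - ∑ mn ∈ B, tr mn * g mn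
      = (∑' x : ↑((B : Set (ℤ × ℤ))ᶜ), ft x.val * g x.val)
        + ∑ mn ∈ B, (ft mn - tr mn) * g mn := by
    have h2 : ∑ mn ∈ B, (ft mn - tr mn) * g mn
        = ∑ mn ∈ B, ft mn * g mn - ∑ mn ∈ B, tr mn * g mn := by
      rw [← Finset.sum_sub_distrib]
      exact Finset.sum_congr rfl fun mn _ => by ring
    rw [← hsplit, h2]
    ring
  rw [hkey]
  calc ‖(∑' x : ↑((B : Set (ℤ × ℤ))ᶜ), ft x.val * g x.val)
        + ∑ mn ∈ B, (ft mn - tr mn) * g mn‖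
      ≤ ‖∑' x : ↑((B : Set (ℤ × ℤ))ᶜ), ft x.val * g x.val‖
        + ‖∑ mn ∈ B, (ft mn - tr mn) * g mn‖ := norm_add_le _ _
    _ ≤ M * Sb * (Dg / (F : ℝ) ^ p) * Sw + M * (Cb / (F : ℝ) ^ p) * Sw * Sg :=
        add_le_add htail hbox_sum
    _ = (M * Sb * Dg * Sw + M * Cb * Sw * Sg) / (F : ℝ) ^ p := by
        field_simp
    _ ≤ (M * Sb * Dg * Sw + M * Cb * Sw * Sg + 1) / (F : ℝ) ^ p := by
        apply div_le_div_of_nonneg_right ?_ (le_of_lt hFpow)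
        linarith
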